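/- Let n, m, s be positive integers with m dividing n, and set W = n/m and A = n²/(m·s²) (a real number). Let q₀, …, q_{m−1} be independent random points, where q_h = (x_h, y_h) is uniformly distributed on the integer grid {h·W, h·W+1, …, (h+1)·W − 1} × {0, 1, …, n−1}. Call q_h well-separated if for every k ≠ h one has |x_h − x_k| · |y_h − y_k| > A. Then for every h ∈ {0, …, m−1}, the probability that q_h is not well-separated is at most 2/s + 3/W + Σ_{k≠h} 2/((|k−h|−1)·s² + s). -/

import Mathlib

/-- The sample space of `m` independent points, where the `h`-th point is uniform on the
`h`-th vertical slab `{h·W, …, (h+1)·W − 1} × {0, …, n−1}` of integer points. -/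
def slabSpace (n m W : ℕ) : Finset (Fin m → ℕ × ℕ) :=
  Fintype.piFinset fun h => (Finset.Ico ((h : ℕ) * W) (((h : ℕ) + 1) * W)) ×ˢ Finset.range n

/-- The point `q h` is well-separated (w.r.t. the area threshold `A`) if for every `k ≠ h`
the smallest axis-aligned rectangle containing `q h` and `q k` has area exceeding `A`,
i.e. `|x_h − x_k| · |y_h − y_k| > A`. -/
def wellSep {m : ℕ} (A : ℝ) (q : Fin m → ℕ × ℕ) (h : Fin m) : Prop :=
  ∀ k : Fin m, k ≠ h →
    A < ((|((q h).1 : ℤ) - ((q k).1 : ℤ)| * |((q h).2 : ℤ) - ((q k).2 : ℤ)| : ℤ) : ℝ)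


open Finset Fintype

variable {ι : Type*} [DecidableEq ι] [Fintype ι] {δ : ι → Type*} [∀ i, DecidableEq (δ i)]

lemma filter_inst_irrel {α : Type*} (p : α → Prop) (i1 i2 : DecidablePred p) (s : Finset α) :
    @Finset.filter α p i1 s = @Finset.filter α p i2 s := by
  congr!

open Classical in
lemma card_filter_one (s : ∀ i, Finset (δ i)) (h : ι) (p : δ h → Prop) :
    ((Fintype.piFinset s).filter (fun f => p (f h))).card
      = ((s h).filter p).card * ∏ i ∈ Finset.univ.erase h, (s i).card := by
  classical
  have : ((Fintype.piFinset s).filter (fun f => p (f h)))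
      = Fintype.piFinset (Function.update s h ((s h).filter p)) := by
    rw [Fintype.piFinset_update_eq_filter_piFinset_mem s h (Finset.filter_subset _ _)]
    ext f
    simp only [Finset.mem_filter, Fintype.mem_piFinset, and_congr_right_iff]
    intro hf
    simp [hf h]
  rw [this, Fintype.card_piFinset]
  rw [← Finset.mul_prod_erase Finset.univ _ (Finset.mem_univ h)]
  congr 1
  · simp
  · apply Finset.prod_congr rfl
    intro i hi
    rw [Function.update_of_ne (Finset.ne_of_mem_erase hi)]

open Classical in
lemma card_filter_two (s : ∀ i, Finset (δ i)) (h k : ι) (hhk : h ≠ k)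
    (P : δ h → δ k → Prop) :
    ((Fintype.piFinset s).filter (fun f => P (f h) (f k))).card
      = (((s h) ×ˢ (s k)).filter (fun ab => P ab.1 ab.2)).card
          * ∏ i ∈ (Finset.univ.erase h).erase k, (s i).card := by
  classical
  rw [Finset.card_eq_sum_card_fiberwise
    (f := fun f => ((f h, f k) : δ h × δ k))
    (t := ((s h) ×ˢ (s k)).filter (fun ab => P ab.1 ab.2))
    (by
      intro f hf
      simp only [Finset.mem_coe, Finset.mem_filter, Fintype.mem_piFinset] at hf
      simp only [Finset.mem_coe, Finset.mem_filter, Finset.mem_product]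
      exact ⟨⟨hf.1 h, hf.1 k⟩, hf.2⟩)]
  rw [Finset.sum_congr rfl (g := fun _ => ∏ i ∈ (Finset.univ.erase h).erase k, (s i).card) ?_,
    Finset.sum_const, smul_eq_mul]
  intro ab hab
  simp only [Finset.mem_filter, Finset.mem_product] at hab
  have e1 : ((Fintype.piFinset s).filter (fun f => P (f h) (f k))).filter
        (fun f => (f h, f k) = ab)
      = Fintype.piFinset (Function.update (Function.update s h {ab.1}) k {ab.2}) := by
    rw [Fintype.piFinset_update_singleton_eq_filter_piFinset_eq _ k
      (by rw [Function.update_of_ne (Ne.symm hhk)]; exact hab.1.2)]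
    rw [Fintype.piFinset_update_singleton_eq_filter_piFinset_eq _ h hab.1.1]
    rw [Finset.filter_filter, Finset.filter_filter]
    apply Finset.filter_congr
    intro f hf
    constructor
    · rintro ⟨hP, hfab⟩
      exact ⟨congrArg Prod.fst hfab, congrArg Prod.snd hfab⟩
    · rintro ⟨h1, h2⟩
      refine ⟨by rw [h1, h2] at *; exact (by rw [← h1, ← h2] at hab; exact hab.2), ?_⟩
      exact Prod.ext h1 h2
  rw [e1, Fintype.card_piFinset]
  rw [← Finset.mul_prod_erase Finset.univ _ (Finset.mem_univ k),
    ← Finset.mul_prod_erase _ _ (Finset.mem_erase.2 ⟨hhk, Finset.mem_univ h⟩)]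
  rw [Function.update_self, Function.update_of_ne hhk, Function.update_self]
  simp only [Finset.card_singleton, one_mul]
  rw [Finset.erase_right_comm]
  apply Finset.prod_congr rfl
  intro i hi
  simp only [Finset.mem_erase] at hi
  rw [Function.update_of_ne hi.1, Function.update_of_ne hi.2.1]

lemma edge_count_right (c W s : ℕ) (hs : 0 < s) :
    s * ((Finset.Ico c (c+W)).filter (fun x => s * (c + W - x) < W)).card ≤ W := by
  have hcx : ((Finset.Ico c (c+W)).filter (fun x => s * (c + W - x) < W)).card
      ≤ (W-1)/s := by
    rw [show (W-1)/s = (Finset.Icc 1 ((W-1)/s)).card by rw [Nat.card_Icc]; simp]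
    apply Finset.card_le_card_of_injOn (fun x => c + W - x)
    · intro x hx
      simp only [Finset.mem_coe, Finset.mem_filter, Finset.mem_Ico] at hx
      obtain ⟨⟨h1, h2⟩, h3⟩ := hx
      simp only [Finset.mem_coe, Finset.mem_Icc]
      refine ⟨by omega, ?_⟩
      rw [Nat.le_div_iff_mul_le hs, mul_comm]
      omega
    · intro x hx y hy hxy
      simp only [Finset.coe_filter, Set.mem_setOf_eq, Finset.mem_Ico] at hx hy
      dsimp only at hxy
      omega
  have h3 : s * ((W-1)/s) ≤ W - 1 := by
    rw [mul_comm]; exact Nat.div_mul_le_self _ _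
  have h4 := Nat.mul_le_mul_left s hcx
  exact le_trans h4 (le_trans h3 (Nat.sub_le W 1))

lemma edge_count_left (c W s : ℕ) (hs : 0 < s) :
    s * ((Finset.Ico c (c+W)).filter (fun x => s * (x + 1 - c) < W)).card ≤ W := by
  have hcx : ((Finset.Ico c (c+W)).filter (fun x => s * (x + 1 - c) < W)).card
      ≤ (W-1)/s := by
    rw [show (W-1)/s = (Finset.Icc 1 ((W-1)/s)).card by rw [Nat.card_Icc]; simp]
    apply Finset.card_le_card_of_injOn (fun x => x + 1 - c)
    · intro x hx
      simp only [Finset.mem_coe, Finset.mem_filter, Finset.mem_Ico] at hx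
      obtain ⟨⟨h1, h2⟩, h3⟩ := hx
      simp only [Finset.mem_coe, Finset.mem_Icc]
      refine ⟨by omega, ?_⟩
      rw [Nat.le_div_iff_mul_le hs, mul_comm]
      omega
    · intro x hx y hy hxy
      simp only [Finset.coe_filter, Set.mem_setOf_eq, Finset.mem_Ico] at hx hy
      dsimp only at hxy
      omega
  have h3 : s * ((W-1)/s) ≤ W - 1 := by
    rw [mul_comm]; exact Nat.div_mul_le_self _ _
  have h4 := Nat.mul_le_mul_left s hcx
  exact le_trans h4 (le_trans h3 (Nat.sub_le W 1))

open Classical in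
lemma pair_count_aux (W n t c1 c2 : ℕ) (P : (ℕ×ℕ) → (ℕ×ℕ) → Prop)
    (hP : ∀ a b : ℕ × ℕ, a ∈ (Finset.Ico c1 (c1+W)) ×ˢ Finset.range n →
      b ∈ (Finset.Ico c2 (c2+W)) ×ˢ Finset.range n → P a b →
      |(a.2 : ℤ) - (b.2 : ℤ)| ≤ (t : ℤ)) :
    ((((Finset.Ico c1 (c1+W)) ×ˢ Finset.range n) ×ˢ
        ((Finset.Ico c2 (c2+W)) ×ˢ Finset.range n)).filter
        (fun ab => P ab.1 ab.2)).card ≤ W * ((2*t+1) * (W*n)) := by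
  classical
  have hcard : (((Finset.Ico c1 (c1+W)) ×ˢ (Finset.Icc (-(t:ℤ)) t) ×ˢ
      ((Finset.Ico c2 (c2+W)) ×ˢ Finset.range n)) : Finset _).card
      = W * ((2*t+1) * (W*n)) := by
    simp [Finset.card_product, Nat.card_Ico, Int.card_Icc, Finset.card_range]
    ring_nf
    omega
  rw [← hcard]
  apply Finset.card_le_card_of_injOn
    (fun ab => (ab.1.1, ((ab.1.2 : ℤ) - (ab.2.2 : ℤ), ab.2)))
  · intro ab hab
    simp only [Finset.mem_coe, Finset.mem_filter, Finset.mem_product] at hab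
    obtain ⟨⟨⟨ha1, ha2⟩, hb⟩, hPab⟩ := hab
    have := hP ab.1 ab.2 (Finset.mem_product.2 ⟨ha1, ha2⟩) (Finset.mem_product.2 hb) hPab
    simp only [Finset.mem_coe, Finset.mem_product, Finset.mem_Icc]
    refine ⟨ha1, ⟨?_, hb⟩⟩
    rw [abs_le] at this
    exact this
  · intro a ha b hb hab
    simp only [Prod.mk.injEq] at hab
    obtain ⟨h1, h2, h3⟩ := hab
    have : a.1.2 = b.1.2 := by
      have := h3 ▸ h2
      omega
    exact Prod.ext (Prod.ext h1 this) h3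


set_option maxHeartbeats 2000000 in
open Classical in
theorem stmt10 (n m s : ℕ) (hn : 0 < n) (hm : 0 < m) (hs : 0 < s) (hdvd : m ∣ n)
    (W : ℕ) (hW : W = n / m) (A : ℝ) (hA : A = (n : ℝ)^2 / (m * s^2)) (h : Fin m) :
    (((slabSpace n m W).filter (fun q => ¬ wellSep A q h)).card : ℝ) /
        ((slabSpace n m W).card : ℝ) ≤
      2 / s + 3 / W +
        ∑ k ∈ Finset.univ.erase h, 2 / ((|((k : ℕ) : ℝ) - ((h : ℕ) : ℝ)| - 1) * s^2 + s) := by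
  classical
  have hnm : n = m * W := by rw [hW, Nat.mul_div_cancel' hdvd]
  have hWpos : 0 < W := by
    rcases Nat.eq_zero_or_pos W with h0 | h0
    · subst h0; simp at hnm; omega
    · exact h0
  set F : Fin m → Finset (ℕ × ℕ) :=
    fun i => (Finset.Ico ((i : ℕ) * W) (((i : ℕ) + 1) * W)) ×ˢ Finset.range n with hF
  have hslab : slabSpace n m W = Fintype.piFinset F := rfl
  have hcardF : ∀ i, (F i).card = W * n := by
    intro i
    simp [hF, Finset.card_product, Nat.card_Ico, add_mul, one_mul]
  -- the good-x predicates
  set gR : ℕ × ℕ → Prop := fun a => W ≤ s * (((h : ℕ) + 1) * W - a.1) with hgR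
  set gL : ℕ × ℕ → Prop := fun a => W ≤ s * (a.1 + 1 - (h : ℕ) * W) with hgL
  set ER := (Fintype.piFinset F).filter (fun q => ¬ gR (q h)) with hER
  set EL := (Fintype.piFinset F).filter (fun q => ¬ gL (q h)) with hEL
  set C : Fin m → Finset (Fin m → ℕ × ℕ) := fun k =>
    (Fintype.piFinset F).filter (fun q => gR (q h) ∧ gL (q h) ∧
      ((|((q h).1 : ℤ) - ((q k).1 : ℤ)| * |((q h).2 : ℤ) - ((q k).2 : ℤ)| : ℤ) : ℝ) ≤ A)
    with hC
  have hsubset : (Fintype.piFinset F).filter (fun q => ¬ wellSep A q h)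
      ⊆ (ER ∪ EL) ∪ (Finset.univ.erase h).biUnion C := by
    intro q hq
    simp only [Finset.mem_filter, wellSep, not_forall, not_lt] at hq
    obtain ⟨hqΩ, k, hk, hkA⟩ := hq
    by_cases h1 : gR (q h)
    · by_cases h2 : gL (q h)
      · refine Finset.mem_union_right _ (Finset.mem_biUnion.2 ⟨k, ?_, ?_⟩)
        · exact Finset.mem_erase.2 ⟨hk, Finset.mem_univ k⟩
        · exact Finset.mem_filter.2 ⟨hqΩ, h1, h2, hkA⟩
      · exact Finset.mem_union_left _ (Finset.mem_union_right _
          (Finset.mem_filter.2 ⟨hqΩ, h2⟩))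
    · exact Finset.mem_union_left _ (Finset.mem_union_left _
        (Finset.mem_filter.2 ⟨hqΩ, h1⟩))
  have hcardsplit : (((Fintype.piFinset F).filter (fun q => ¬ wellSep A q h)).card : ℝ)
      ≤ (ER.card : ℝ) + (EL.card : ℝ) + ∑ k ∈ Finset.univ.erase h, ((C k).card : ℝ) := by
    have h1 := Finset.card_le_card hsubset
    have h2 := Finset.card_union_le (ER ∪ EL) ((Finset.univ.erase h).biUnion C)
    have h3 := Finset.card_union_le ER EL
    have h4 := Finset.card_biUnion_le (s := Finset.univ.erase h) (t := C)
    have hN : ((Fintype.piFinset F).filter (fun q => ¬ wellSep A q h)).card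
        ≤ ER.card + EL.card + ∑ k ∈ Finset.univ.erase h, (C k).card := by
      refine le_trans h1 (le_trans h2 ?_)
      have := add_le_add h3 h4
      omega
    calc (((Fintype.piFinset F).filter (fun q => ¬ wellSep A q h)).card : ℝ)
        ≤ ((ER.card + EL.card + ∑ k ∈ Finset.univ.erase h, (C k).card : ℕ) : ℝ) := by
          exact_mod_cast hN
      _ = _ := by push_cast; ring
  set N : ℕ := W * n with hN
  have hNpos : 0 < N := Nat.mul_pos hWpos hn
  have hΩcard : (Fintype.piFinset F).card = N ^ m := by
    rw [Fintype.card_piFinset]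
    simp [hcardF, Finset.prod_const]
  have hNm : (N:ℝ)^m = (N:ℝ)^(m-1) * N := by
    rw [← pow_succ]; congr 1; omega
  have hcarderase : (Finset.univ.erase h).card = m - 1 := by
    rw [Finset.card_erase_of_mem (Finset.mem_univ h)]
    simp
  have hProd1 : ∏ i ∈ Finset.univ.erase h, (F i).card = N^(m-1) := by
    rw [Finset.prod_congr rfl (fun i _ => hcardF i), Finset.prod_const, hcarderase]
  have hNmpos : (0:ℝ) < (N:ℝ)^m := by positivity
  -- the ER bound
  have hERbound : (ER.card : ℝ) / ((N:ℝ)^m) ≤ 1 / s := by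
    have e1 : ER.card = ((F h).filter (fun a => ¬ gR a)).card * N^(m-1) := by
      rw [hER, ← hProd1]
      have := card_filter_one F h (fun a => ¬ gR a)
      refine (congrArg Finset.card (filter_inst_irrel _ _ _ _)).trans (this.trans ?_)
      congr 1
      exact congrArg Finset.card (filter_inst_irrel _ _ _ _)
    have hmul : ((h:ℕ)+1)*W = (h:ℕ)*W + W := by ring
    have e2 : (F h).filter (fun a => ¬ gR a)
        = ((Finset.Ico ((h:ℕ)*W) ((h:ℕ)*W + W)).filter
            (fun x => s * ((h:ℕ)*W + W - x) < W)) ×ˢ Finset.range n := by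
      ext a
      simp only [hF, hgR, hmul, Finset.mem_filter, Finset.mem_product, Finset.mem_Ico,
        Finset.mem_range, not_le]
      tauto
    set cx := ((Finset.Ico ((h:ℕ)*W) ((h:ℕ)*W + W)).filter
            (fun x => s * ((h:ℕ)*W + W - x) < W)).card with hcxdef
    have h1 : ER.card = cx * n * N^(m-1) := by
      rw [e1, e2, Finset.card_product, Finset.card_range]
    have h2 : (s:ℝ) * cx ≤ W := by exact_mod_cast edge_count_right ((h:ℕ)*W) W s hs
    have h3 : (N:ℝ) = (W:ℝ) * n := by rw [hN]; push_cast; ring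
    rw [div_le_div_iff₀ hNmpos (by exact_mod_cast hs : (0:ℝ) < (s:ℝ))]
    calc (ER.card : ℝ) * s = ((cx * n * N^(m-1) : ℕ) : ℝ) * s := by rw [h1]
      _ = ((s:ℝ)*cx) * ((n:ℝ) * (N:ℝ)^(m-1)) := by push_cast; ring
      _ ≤ (W:ℝ) * ((n:ℝ) * (N:ℝ)^(m-1)) := by
          apply mul_le_mul_of_nonneg_right h2 (by positivity)
      _ = ((W:ℝ)*n) * (N:ℝ)^(m-1) := by ring
      _ = 1 * (N:ℝ)^m := by rw [← h3, hNm]; ring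
  have hELbound : (EL.card : ℝ) / ((N:ℝ)^m) ≤ 1 / s := by
    have e1 : EL.card = ((F h).filter (fun a => ¬ gL a)).card * N^(m-1) := by
      rw [hEL, ← hProd1]
      have := card_filter_one F h (fun a => ¬ gL a)
      refine (congrArg Finset.card (filter_inst_irrel _ _ _ _)).trans (this.trans ?_)
      congr 1
      exact congrArg Finset.card (filter_inst_irrel _ _ _ _)
    have hmul : ((h:ℕ)+1)*W = (h:ℕ)*W + W := by ring
    have e2 : (F h).filter (fun a => ¬ gL a)
        = ((Finset.Ico ((h:ℕ)*W) ((h:ℕ)*W + W)).filter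
            (fun x => s * (x + 1 - (h:ℕ)*W) < W)) ×ˢ Finset.range n := by
      ext a
      simp only [hF, hgL, hmul, Finset.mem_filter, Finset.mem_product, Finset.mem_Ico,
        Finset.mem_range, not_le]
      tauto
    set cx := ((Finset.Ico ((h:ℕ)*W) ((h:ℕ)*W + W)).filter
            (fun x => s * (x + 1 - (h:ℕ)*W) < W)).card with hcxdef
    have h1 : EL.card = cx * n * N^(m-1) := by
      rw [e1, e2, Finset.card_product, Finset.card_range]
    have h2 : (s:ℝ) * cx ≤ W := by exact_mod_cast edge_count_left ((h:ℕ)*W) W s hs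
    have h3 : (N:ℝ) = (W:ℝ) * n := by rw [hN]; push_cast; ring
    rw [div_le_div_iff₀ hNmpos (by exact_mod_cast hs : (0:ℝ) < (s:ℝ))]
    calc (EL.card : ℝ) * s = ((cx * n * N^(m-1) : ℕ) : ℝ) * s := by rw [h1]
      _ = ((s:ℝ)*cx) * ((n:ℝ) * (N:ℝ)^(m-1)) := by push_cast; ring
      _ ≤ (W:ℝ) * ((n:ℝ) * (N:ℝ)^(m-1)) := by
          apply mul_le_mul_of_nonneg_right h2 (by positivity)
      _ = ((W:ℝ)*n) * (N:ℝ)^(m-1) := by ring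
      _ = 1 * (N:ℝ)^m := by rw [← h3, hNm]; ring
  have hs' : (0:ℝ) < s := by exact_mod_cast hs
  have hW' : (0:ℝ) < W := by exact_mod_cast hWpos
  have hn' : (0:ℝ) < n := by exact_mod_cast hn
  have hm' : (0:ℝ) < m := by exact_mod_cast hm
  have hApos : 0 ≤ A := by rw [hA]; positivity
  have hCbound : ∀ k ∈ Finset.univ.erase h, ((C k).card : ℝ) / ((N:ℝ)^m)
      ≤ 2 / ((|((k:ℕ):ℝ) - ((h:ℕ):ℝ)| - 1) * s^2 + s) + 1/n := by
    intro k hk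
    have hkh : k ≠ h := (Finset.mem_erase.1 hk).1
    have hkh' : (k:ℕ) ≠ (h:ℕ) := fun e => hkh (Fin.ext e)
    set j : ℕ := ((k:ℕ) - (h:ℕ)) + ((h:ℕ) - (k:ℕ)) with hj
    have hj1 : 1 ≤ j := by omega
    have habs : |((k:ℕ):ℝ) - ((h:ℕ):ℝ)| = (j:ℝ) := by
      rcases le_or_gt ((k:ℕ)) ((h:ℕ)) with hle | hlt
      · have hje : j = (h:ℕ) - (k:ℕ) := by omega
        rw [hje, abs_of_nonpos (by
          simp only [sub_nonpos]; exact_mod_cast hle), Nat.cast_sub hle]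
        ring
      · have hje : j = (k:ℕ) - (h:ℕ) := by omega
        rw [hje, abs_of_nonneg (by
          simp only [sub_nonneg]; exact_mod_cast hlt.le), Nat.cast_sub hlt.le]
    set D : ℝ := ((j:ℝ) - 1) * W + (W:ℝ)/s with hD
    have hDpos : 0 < D := by
      apply add_pos_of_nonneg_of_pos
      · apply mul_nonneg _ hW'.le
        have : (1:ℝ) ≤ (j:ℝ) := by exact_mod_cast hj1
        linarith
      · exact div_pos hW' hs'
    set t : ℕ := ⌊A / D⌋₊ with ht
    have hmulh : ((h:ℕ)+1)*W = (h:ℕ)*W + W := by ring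
    have hmulk : ((k:ℕ)+1)*W = (k:ℕ)*W + W := by ring
    rw [habs]
    set P : ℕ × ℕ → ℕ × ℕ → Prop := fun a b => gR a ∧ gL a ∧
      ((|(a.1:ℤ) - (b.1:ℤ)| * |(a.2:ℤ) - (b.2:ℤ)| : ℤ):ℝ) ≤ A with hP
    -- geometric key fact
    have hgeom : ∀ a b : ℕ × ℕ,
        a ∈ (Finset.Ico ((h:ℕ)*W) ((h:ℕ)*W+W)) ×ˢ Finset.range n →
        b ∈ (Finset.Ico ((k:ℕ)*W) ((k:ℕ)*W+W)) ×ˢ Finset.range n →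
        P a b → |(a.2:ℤ) - (b.2:ℤ)| ≤ (t:ℤ) := by
      rintro ⟨x, y⟩ ⟨u, v⟩ hab hbb hPab
      obtain ⟨hgr, hgl, hprod⟩ := hPab
      simp only [Finset.mem_product, Finset.mem_Ico, Finset.mem_range] at hab hbb
      obtain ⟨⟨hx1, hx2⟩, hy⟩ := hab
      obtain ⟨⟨hu1, hu2⟩, hv⟩ := hbb
      simp only [hgR, hgL] at hgr hgl
      -- distance lower bound
      have hd : D ≤ ((|(x:ℤ) - (u:ℤ)| : ℤ) : ℝ) := by
        rcases lt_or_gt_of_ne hkh' with hlt | hgt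
        · -- k < h : use gL
          have hje : (j:ℝ) = ((h:ℕ):ℝ) - ((k:ℕ):ℝ) := by
            have : j = (h:ℕ) - (k:ℕ) := by omega
            rw [this, Nat.cast_sub hlt.le]
          have hexp : ((j:ℝ) - 1) * (W:ℝ)
              = ((h:ℕ):ℝ)*W - ((k:ℕ):ℝ)*W - W := by rw [hje]; ring
          set l : ℕ := x + 1 - (h:ℕ)*W with hl
          have hl2 : 1 ≤ l ∧ x + 1 = (h:ℕ)*W + l := by omega
          have hgl' : W ≤ s * l := by
            have : x + 1 - (h:ℕ)*W = l := rfl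
            omega
          have hWl : (W:ℝ) ≤ (s:ℝ) * l := by exact_mod_cast hgl'
          have hlge : (W:ℝ)/s ≤ (l:ℝ) := by
            rw [div_le_iff₀ hs']; nlinarith
          have hkW : ((k:ℕ)+1)*W ≤ (h:ℕ)*W := Nat.mul_le_mul_right W hlt
          have hux : u < x := by omega
          have hzz : |(x:ℤ) - (u:ℤ)| = (x:ℤ) - u := abs_of_nonneg (by omega)
          have habs2 : ((|(x:ℤ) - (u:ℤ)| : ℤ) : ℝ) = (x:ℝ) - u := by
            rw [hzz]; push_cast; ring
          rw [habs2, hD]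
          have f1 : (x:ℝ) + 1 = ((h:ℕ):ℝ)*W + l := by exact_mod_cast hl2.2
          have f2 : (u:ℝ) + 1 ≤ ((k:ℕ):ℝ)*W + W := by
            have : u + 1 ≤ (k:ℕ)*W + W := hu2
            exact_mod_cast this
          linarith
        · -- h < k : use gR
          have hje : (j:ℝ) = ((k:ℕ):ℝ) - ((h:ℕ):ℝ) := by
            have : j = (k:ℕ) - (h:ℕ) := by omega
            rw [this, Nat.cast_sub hgt.le]
          have hexp : ((j:ℝ) - 1) * (W:ℝ)
              = ((k:ℕ):ℝ)*W - ((h:ℕ):ℝ)*W - W := by rw [hje]; ring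
          set r : ℕ := (h:ℕ)*W + W - x with hr
          have hr2 : 1 ≤ r ∧ x + r = (h:ℕ)*W + W := by omega
          have hgr' : W ≤ s * r := by
            have e : (h:ℕ)*W + W - x = ((h:ℕ)+1)*W - x := by rw [hmulh]
            rw [hr, e]; exact hgr
          have hWr : (W:ℝ) ≤ (s:ℝ) * r := by exact_mod_cast hgr'
          have hrge : (W:ℝ)/s ≤ (r:ℝ) := by
            rw [div_le_iff₀ hs']; nlinarith
          have hhW : ((h:ℕ)+1)*W ≤ (k:ℕ)*W := Nat.mul_le_mul_right W hgt
          have hxu : x < u := by omega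
          have hzz : |(x:ℤ) - (u:ℤ)| = (u:ℤ) - x := by
            rw [abs_sub_comm]; exact abs_of_nonneg (by omega)
          have habs2 : ((|(x:ℤ) - (u:ℤ)| : ℤ) : ℝ) = (u:ℝ) - x := by
            rw [hzz]; push_cast; ring
          rw [habs2, hD]
          have f1 : (x:ℝ) + r = ((h:ℕ):ℝ)*W + W := by exact_mod_cast hr2.2
          have f2 : ((k:ℕ):ℝ)*W ≤ (u:ℝ) := by exact_mod_cast hu1
          linarith
      -- now bound the y-difference
      have e0 : (((|(x:ℤ) - (u:ℤ)| * |(y:ℤ) - (v:ℤ)| : ℤ)):ℝ)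
          = ((|(x:ℤ) - (u:ℤ)| : ℤ):ℝ) * ((|(y:ℤ) - (v:ℤ)| : ℤ):ℝ) := by
        push_cast; ring
      rw [e0] at hprod
      have heR0 : (0:ℝ) ≤ ((|(y:ℤ) - (v:ℤ)| : ℤ):ℝ) := by positivity
      have hDe : D * ((|(y:ℤ) - (v:ℤ)| : ℤ):ℝ) ≤ A :=
        le_trans (mul_le_mul_of_nonneg_right hd heR0) hprod
      have hle : ((|(y:ℤ) - (v:ℤ)| : ℤ):ℝ) ≤ A / D := by
        rw [le_div_iff₀ hDpos]; linarith [mul_comm D (((|(y:ℤ) - (v:ℤ)| : ℤ):ℝ))]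
      have hcast : (((|(y:ℤ) - (v:ℤ)|).toNat : ℕ) : ℝ) = ((|(y:ℤ) - (v:ℤ)| : ℤ):ℝ) := by
        have := Int.toNat_of_nonneg (abs_nonneg ((y:ℤ) - (v:ℤ)))
        exact_mod_cast congrArg (Int.cast : ℤ → ℝ) this
      have h5 : (|(y:ℤ) - (v:ℤ)|).toNat ≤ t := Nat.le_floor (by rw [hcast]; exact hle)
      exact Int.toNat_le.mp h5
    -- counting
    have hm2 : 2 ≤ m := by
      have := k.isLt; have := h.isLt; omega
    have hFh : F h = (Finset.Ico ((h:ℕ)*W) ((h:ℕ)*W+W)) ×ˢ Finset.range n := by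
      rw [hF]; simp only; rw [hmulh]
    have hFk : F k = (Finset.Ico ((k:ℕ)*W) ((k:ℕ)*W+W)) ×ˢ Finset.range n := by
      rw [hF]; simp only; rw [hmulk]
    have hprod2 : ∏ i ∈ (Finset.univ.erase h).erase k, (F i).card = N^(m-2) := by
      rw [Finset.prod_congr rfl (fun i _ => hcardF i), Finset.prod_const]
      congr 1
      rw [Finset.card_erase_of_mem (Finset.mem_erase.2 ⟨hkh, Finset.mem_univ k⟩), hcarderase]
      omega
    have e1 : (C k).card
        = (((F h) ×ˢ (F k)).filter (fun ab => P ab.1 ab.2)).card * N^(m-2) := by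
      rw [hC]
      simp only
      have := card_filter_two F h k (Ne.symm hkh) P
      rw [← hprod2]
      refine (congrArg Finset.card (filter_inst_irrel _ _ _ _)).trans (this.trans ?_)
      congr 1
      exact congrArg Finset.card (filter_inst_irrel _ _ _ _)
    have e2 : (((F h) ×ˢ (F k)).filter (fun ab => P ab.1 ab.2)).card
        ≤ W * ((2*t+1) * (W*n)) := by
      rw [hFh, hFk]
      have := pair_count_aux W n t ((h:ℕ)*W) ((k:ℕ)*W) P hgeom
      exact le_trans (le_of_eq (congrArg Finset.card (filter_inst_irrel _ _ _ _))) this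
    have h3 : (N:ℝ) = (W:ℝ) * n := by rw [hN]; push_cast; ring
    have hN2 : (N:ℝ)^2 = (W:ℝ)^2 * (n:ℝ)^2 := by rw [h3]; ring
    have hNm2 : (N:ℝ)^m = ((N:ℝ)^2) * (N:ℝ)^(m-2) := by
      rw [← pow_add]; congr 1; omega
    have hratio : ((C k).card : ℝ) / (N:ℝ)^m ≤ (2*(t:ℝ)+1)/n := by
      rw [div_le_div_iff₀ hNmpos hn']
      have e2' : ((((F h) ×ˢ (F k)).filter (fun ab => P ab.1 ab.2)).card : ℝ)
          ≤ ((W * ((2*t+1) * (W*n)) : ℕ) : ℝ) := by exact_mod_cast e2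
      calc ((C k).card : ℝ) * n
          = ((((F h) ×ˢ (F k)).filter (fun ab => P ab.1 ab.2)).card : ℝ)
              * (N:ℝ)^(m-2) * n := by rw [e1]; push_cast; ring
        _ ≤ ((W * ((2*t+1) * (W*n)) : ℕ) : ℝ) * (N:ℝ)^(m-2) * n := by
            apply mul_le_mul_of_nonneg_right _ hn'.le
            exact mul_le_mul_of_nonneg_right e2' (by positivity)
        _ = (2*(t:ℝ)+1) * ((W:ℝ)^2*(n:ℝ)^2*(N:ℝ)^(m-2)) := by push_cast; ring
        _ = (2*(t:ℝ)+1) * ((N:ℝ)^2*(N:ℝ)^(m-2)) := by rw [hN2]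
        _ = (2*(t:ℝ)+1) * (N:ℝ)^m := by rw [← hNm2]
    have hden : (0:ℝ) < ((j:ℝ)-1)*(s:ℝ)^2 + s := by
      apply add_pos_of_nonneg_of_pos _ hs'
      apply mul_nonneg _ (by positivity)
      have : (1:ℝ) ≤ (j:ℝ) := by exact_mod_cast hj1
      linarith
    have hid : 2 * (A/D) / n = 2 / (((j:ℝ)-1)*(s:ℝ)^2 + s) := by
      have hnr : (n:ℝ) = (m:ℝ)*W := by exact_mod_cast hnm
      have hDalt : D = (W:ℝ) * ((((j:ℝ)-1)*(s:ℝ)^2 + s) / (s:ℝ)^2) := by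
        rw [hD]; field_simp
      rw [hA, hnr, hDalt]
      field_simp [hs'.ne', hW'.ne', hm'.ne', hden.ne']
    have htle : (t:ℝ) ≤ A / D := Nat.floor_le (div_nonneg hApos hDpos.le)
    calc ((C k).card : ℝ) / (N:ℝ)^m ≤ (2*(t:ℝ)+1)/n := hratio
      _ = 2*(t:ℝ)/n + 1/n := by rw [← add_div]
      _ ≤ 2*(A/D)/n + 1/n := by gcongr
      _ = 2 / (((j:ℝ)-1)*(s:ℝ)^2 + s) + 1/n := by rw [hid]
  -- final assembly
  have hnr : (n:ℝ) = (m:ℝ)*W := by exact_mod_cast hnm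
  have hb : ((m-1:ℕ):ℝ) * (1/n) ≤ 3/W := by
    have h1 : ((m-1:ℕ):ℝ) ≤ (m:ℝ) := by exact_mod_cast Nat.sub_le m 1
    calc ((m-1:ℕ):ℝ) * (1/n) ≤ (m:ℝ) * (1/n) := by
          apply mul_le_mul_of_nonneg_right h1 (by positivity)
      _ = 1/W := by rw [hnr]; field_simp
      _ ≤ 3/W := by gcongr; norm_num
  have hgoal : (((Fintype.piFinset F).filter (fun q => ¬ wellSep A q h)).card : ℝ) /
      ((N:ℝ)^m)
      ≤ 2 / s + 3 / W +
        ∑ k ∈ Finset.univ.erase h, 2 / ((|((k : ℕ) : ℝ) - ((h : ℕ) : ℝ)| - 1) * s^2 + s) := by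
    calc (((Fintype.piFinset F).filter (fun q => ¬ wellSep A q h)).card : ℝ) / ((N:ℝ)^m)
        ≤ ((ER.card : ℝ) + (EL.card : ℝ) + ∑ k ∈ Finset.univ.erase h, ((C k).card : ℝ))
            / ((N:ℝ)^m) := by gcongr
      _ = (ER.card : ℝ)/(N:ℝ)^m + (EL.card : ℝ)/(N:ℝ)^m
            + ∑ k ∈ Finset.univ.erase h, ((C k).card : ℝ)/(N:ℝ)^m := by
          rw [add_div, add_div, Finset.sum_div]
      _ ≤ 1/s + 1/s + ∑ k ∈ Finset.univ.erase h,
            (2 / ((|((k : ℕ) : ℝ) - ((h : ℕ) : ℝ)| - 1) * s^2 + s) + 1/n) :=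
          add_le_add (add_le_add hERbound hELbound) (Finset.sum_le_sum hCbound)
      _ = 1/s + 1/s + (∑ k ∈ Finset.univ.erase h,
            2 / ((|((k : ℕ) : ℝ) - ((h : ℕ) : ℝ)| - 1) * s^2 + s)
            + ((m-1:ℕ):ℝ) * (1/n)) := by
          rw [Finset.sum_add_distrib, Finset.sum_const, hcarderase, nsmul_eq_mul]
      _ ≤ 2/s + 3/W + ∑ k ∈ Finset.univ.erase h,
            2 / ((|((k : ℕ) : ℝ) - ((h : ℕ) : ℝ)| - 1) * s^2 + s) := by
          have h2s : 1/(s:ℝ) + 1/s = 2/s := by ring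
          linarith
  have hΩR : ((slabSpace n m W).card : ℝ) = (N:ℝ)^m := by
    rw [hslab, hΩcard]; push_cast; ring
  calc (((slabSpace n m W).filter (fun q => ¬ wellSep A q h)).card : ℝ) /
      ((slabSpace n m W).card : ℝ)
      = (((Fintype.piFinset F).filter (fun q => ¬ wellSep A q h)).card : ℝ) / ((N:ℝ)^m) := by
        rw [hΩR]; rfl
    _ ≤ _ := hgoal
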